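/- Let 2 ≤ n ≤ 4 and s ≥ 1. Then G(J(P_n)^s) = F(J(P_n)^s), i.e., every s-fold product of minimal generators of J(P_n) is a minimal generator of J(P_n)^s. Moreover, every U ∈ F(J(P_n)^s) has a unique expression as an s-fold product of minimal generators of J(P_n) (unique exponent vector). -/

import Mathlib

open MvPolynomial

noncomputable section

/-- The cover ideal of the path graph `P_n` on vertices `x_1, …, x_n`:
the intersection of the ideals `(x_i, x_{i+1})` over the edges of the path. -/
def pathCoverIdeal (k : Type*) [Field k] (n : ℕ) : Ideal (MvPolynomial ℕ k) :=
  ⨅ i ∈ Finset.Icc 1 (n - 1), Ideal.span {(X i : MvPolynomial ℕ k), X (i + 1)}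

/-- A monomial with coefficient `1`. -/
def IsMonomial {k : Type*} [Field k] (m : MvPolynomial ℕ k) : Prop :=
  ∃ a : ℕ →₀ ℕ, m = monomial a 1

/-- The minimal monomial generating set `G(I)` of a monomial ideal `I`:
monomials of `I` that are not strictly divisible by another monomial of `I`. -/
def minGens {k : Type*} [Field k] (I : Ideal (MvPolynomial ℕ k)) :
    Set (MvPolynomial ℕ k) :=
  {m | IsMonomial m ∧ m ∈ I ∧ ∀ m', IsMonomial m' → m' ∈ I → m' ∣ m → m' = m}

/-- The rooted list `R(P_n)` of the path `P_n`. -/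
def rootedList (k : Type*) [Field k] : ℕ → List (MvPolynomial ℕ k)
  | 0 => [1]
  | 1 => [1]
  | 2 => [X 1, X 2]
  | 3 => [X 2, X 1 * X 3]
  | (n + 4) =>
      ((rootedList k (n + 2)).map fun u => X (n + 3) * u) ++
      ((rootedList k (n + 1)).map fun u => X (n + 4) * X (n + 2) * u)

/-- `F(I^s)`: the set of `s`-fold products of minimal generators of `I`. -/
def sFold {k : Type*} [Field k] (I : Ideal (MvPolynomial ℕ k)) (s : ℕ) :
    Set (MvPolynomial ℕ k) :=
  {m | ∃ L : List (MvPolynomial ℕ k), L.length = s ∧ (∀ u ∈ L, u ∈ minGens I) ∧ m = L.prod}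

/-- `a >_lex b`: the first entry where `a` and `b` differ is bigger in `a`. -/
def lexGt (a b : ℕ → ℕ) : Prop :=
  ∃ t, (∀ j, j < t → a j = b j) ∧ b t < a t

/-- `a` is an exponent-vector expression of `M` as an `s`-fold product of the terms of
the list `L`. -/
def IsExprOn {k : Type*} [Field k] (L : List (MvPolynomial ℕ k)) (s : ℕ) (a : ℕ → ℕ)
    (M : MvPolynomial ℕ k) : Prop :=
  (∀ i, L.length ≤ i → a i = 0) ∧ (∑ i ∈ Finset.range L.length, a i) = s ∧
    M = ∏ i ∈ Finset.range L.length, (L.getD i 1) ^ (a i)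

/-- `a` is the (lexicographically) maximal expression of `M` as an `s`-fold product of
the terms of the list `L`. -/
def IsMaxExpr {k : Type*} [Field k] (L : List (MvPolynomial ℕ k)) (s : ℕ) (a : ℕ → ℕ)
    (M : MvPolynomial ℕ k) : Prop :=
  IsExprOn L s a M ∧ ∀ b, IsExprOn L s b M → b ≠ a → lexGt a b

/-- The rooted order `M >_R N` on `s`-fold products, relative to the list `L` of
minimal generators: maximal expressions are compared lexicographically. -/
def rootedGt {k : Type*} [Field k] (L : List (MvPolynomial ℕ k)) (s : ℕ)
    (M N : MvPolynomial ℕ k) : Prop :=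
  ∃ a b, IsMaxExpr L s a M ∧ IsMaxExpr L s b N ∧ lexGt a b

/-- An ideal is generated by a subset of the variables. -/
def genByVars {k : Type*} [Field k] (I : Ideal (MvPolynomial ℕ k)) : Prop :=
  ∃ T : Set ℕ, I = Ideal.span ((fun i => (X i : MvPolynomial ℕ k)) '' T)

end

section Aux

open Finsupp Pointwise

variable {k : Type*} [Field k]

/-- Monomial with coefficient one. -/
private noncomputable def Mo (k : Type*) [Field k] (b : ℕ →₀ ℕ) : MvPolynomial ℕ k := monomial b 1

private lemma Mo_inj : Function.Injective (Mo k) :=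
  monomial_left_injective one_ne_zero

private lemma prod_map_Mo (A : List (ℕ →₀ ℕ)) : (A.map (Mo k)).prod = Mo k A.sum := by
  induction A with
  | nil => simp [Mo]
  | cons a A ih => simp only [List.map_cons, List.prod_cons, List.sum_cons, ih, Mo, monomial_mul, one_mul]

private lemma mem_span_Mo {S : Set (ℕ →₀ ℕ)} {p : MvPolynomial ℕ k} :
    p ∈ Ideal.span (Mo k '' S) ↔ ∀ d ∈ p.support, ∃ b ∈ S, b ≤ d :=
  mem_ideal_span_monomial_image

private lemma Mo_mem_span {S : Set (ℕ →₀ ℕ)} {a : ℕ →₀ ℕ} :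
    Mo k a ∈ Ideal.span (Mo k '' S) ↔ ∃ b ∈ S, b ≤ a := by
  rw [mem_span_Mo]
  constructor
  · intro h
    exact h a (by simp [Mo, support_monomial])
  · intro h d hd
    have hda : a = d := by simpa [Mo, support_monomial] using hd
    exact hda ▸ h

/-- The set of sums of `s`-element lists from `S`. -/
private def sumsSet (S : Set (ℕ →₀ ℕ)) (s : ℕ) : Set (ℕ →₀ ℕ) :=
  {d | ∃ A : List (ℕ →₀ ℕ), A.length = s ∧ (∀ b ∈ A, b ∈ S) ∧ d = A.sum}

private lemma sumsSet_zero (S : Set (ℕ →₀ ℕ)) : sumsSet S 0 = {0} := by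
  ext d
  constructor
  · rintro ⟨A, hlen, -, rfl⟩
    rw [List.length_eq_zero_iff] at hlen
    subst hlen; simp
  · rintro rfl
    exact ⟨[], rfl, by simp, rfl⟩

private lemma sumsSet_succ (S : Set (ℕ →₀ ℕ)) (s : ℕ) :
    sumsSet S (s + 1) = S + sumsSet S s := by
  ext d
  constructor
  · rintro ⟨A, hlen, hmem, rfl⟩
    cases A with
    | nil => simp at hlen
    | cons a A =>
      refine Set.add_mem_add (hmem a (List.mem_cons_self))
        ⟨A, by simpa using hlen, fun b hb => hmem b (List.mem_cons_of_mem _ hb), rfl⟩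
  · rintro ⟨b, hb, d', ⟨A, hlen, hmem, rfl⟩, rfl⟩
    refine ⟨b :: A, by simp [hlen], ?_, by simp⟩
    intro c hc
    rcases List.mem_cons.mp hc with rfl | hc
    · exact hb
    · exact hmem c hc

private lemma image_Mo_mul (S T : Set (ℕ →₀ ℕ)) :
    (Mo k '' S) * (Mo k '' T) = Mo k '' (S + T) := by
  ext x
  constructor
  · rintro ⟨-, ⟨a, ha, rfl⟩, -, ⟨b, hb, rfl⟩, rfl⟩
    exact ⟨a + b, Set.add_mem_add ha hb, by simp [Mo, monomial_mul]⟩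
  · rintro ⟨-, ⟨a, ha, b, hb, rfl⟩, rfl⟩
    exact ⟨Mo k a, ⟨a, ha, rfl⟩, Mo k b, ⟨b, hb, rfl⟩, by simp [Mo, monomial_mul]⟩

private lemma span_Mo_pow (S : Set (ℕ →₀ ℕ)) (s : ℕ) :
    (Ideal.span (Mo k '' S)) ^ s = Ideal.span (Mo k '' sumsSet S s) := by
  induction s with
  | zero =>
    rw [pow_zero, sumsSet_zero, Set.image_singleton]
    have h0 : Mo k 0 = 1 := by simp [Mo]
    rw [h0, Ideal.span_singleton_one, Ideal.one_eq_top]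
  | succ s ih =>
    rw [pow_succ', ih, Ideal.span_mul_span', image_Mo_mul, sumsSet_succ]

private lemma minGens_span_Mo {T : Set (ℕ →₀ ℕ)}
    (hT : ∀ b ∈ T, ∀ b' ∈ T, b ≤ b' → b = b') :
    minGens (Ideal.span (Mo k '' T)) = Mo k '' T := by
  ext m
  constructor
  · rintro ⟨⟨a, rfl⟩, hmem, hmin⟩
    obtain ⟨b, hb, hba⟩ := Mo_mem_span.mp hmem
    have hdvd : Mo k b ∣ Mo k a := monomial_dvd_monomial.mpr ⟨Or.inr hba, dvd_refl 1⟩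
    have heq := hmin (Mo k b) ⟨b, rfl⟩ (Ideal.subset_span ⟨b, hb, rfl⟩) hdvd
    exact ⟨b, hb, heq⟩
  · rintro ⟨b, hb, rfl⟩
    refine ⟨⟨b, rfl⟩, Ideal.subset_span ⟨b, hb, rfl⟩, ?_⟩
    rintro m' ⟨a', rfl⟩ hmem' hdvd
    have ha'b : a' ≤ b := by
      rcases (monomial_dvd_monomial.mp hdvd).1 with h | h
      · exact absurd h one_ne_zero
      · exact h
    obtain ⟨b', hb', hb'a'⟩ := Mo_mem_span.mp hmem'
    have hbb : b' = b := hT b' hb' b hb (hb'a'.trans ha'b)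
    have : a' = b := le_antisymm ha'b (hbb ▸ hb'a')
    rw [this]; rfl

private lemma list_lift {T : Set (ℕ →₀ ℕ)} :
    ∀ L : List (MvPolynomial ℕ k), (∀ u ∈ L, u ∈ Mo k '' T) →
      ∃ A : List (ℕ →₀ ℕ), (∀ b ∈ A, b ∈ T) ∧ L = A.map (Mo k)
  | [], _ => ⟨[], by simp, rfl⟩
  | u :: L, h => by
      obtain ⟨b, hb, rfl⟩ := h u (List.mem_cons_self)
      obtain ⟨A, hA, rfl⟩ := list_lift L (fun v hv => h v (List.mem_cons_of_mem _ hv))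
      refine ⟨b :: A, ?_, rfl⟩
      intro c hc
      rcases List.mem_cons.mp hc with rfl | hc
      · exact hb
      · exact hA c hc

private lemma sFold_span_Mo {T : Set (ℕ →₀ ℕ)}
    (hT : ∀ b ∈ T, ∀ b' ∈ T, b ≤ b' → b = b') (s : ℕ) :
    sFold (Ideal.span (Mo k '' T)) s = Mo k '' sumsSet T s := by
  ext m
  constructor
  · rintro ⟨L, hlen, hmem, rfl⟩
    rw [minGens_span_Mo hT] at hmem
    obtain ⟨A, hA, rfl⟩ := list_lift L hmem
    exact ⟨A.sum, ⟨A, by simpa using hlen, hA, rfl⟩, (prod_map_Mo A).symm⟩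
  · rintro ⟨d, ⟨A, hlen, hA, rfl⟩, rfl⟩
    refine ⟨A.map (Mo k), by simp [hlen], ?_, (prod_map_Mo A).symm⟩
    rw [minGens_span_Mo hT]
    intro u hu
    obtain ⟨b, hb, rfl⟩ := List.mem_map.mp hu
    exact ⟨b, hA b hb, rfl⟩

private lemma sum_coord (A : List (ℕ →₀ ℕ)) (j : ℕ) :
    A.sum j = (A.map fun u => u j).sum := by
  induction A with
  | nil => simp
  | cons a A ih => simp [Finsupp.add_apply, ih]

private lemma count_coord1 (A : List (ℕ →₀ ℕ)) (b : ℕ →₀ ℕ) (j : ℕ)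
    (h : ∀ u ∈ A, u j = if u = b then 1 else 0) : A.sum j = A.count b := by
  induction A with
  | nil => simp
  | cons a A ih =>
    have ha := h a (List.mem_cons_self)
    rw [List.sum_cons, Finsupp.add_apply, ih (fun u hu => h u (List.mem_cons_of_mem _ hu)),
      List.count_cons, ha]
    by_cases hab : a = b <;> simp [hab] <;> omega

private lemma count_coord2 (A : List (ℕ →₀ ℕ)) (b c : ℕ →₀ ℕ) (j : ℕ)
    (h : ∀ u ∈ A, u j = (if u = b then 1 else 0) + (if u = c then 1 else 0)) :
    A.sum j = A.count b + A.count c := by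
  induction A with
  | nil => simp
  | cons a A ih =>
    have ha := h a (List.mem_cons_self)
    rw [List.sum_cons, Finsupp.add_apply, ih (fun u hu => h u (List.mem_cons_of_mem _ hu)),
      List.count_cons, List.count_cons, ha]
    by_cases hab : a = b <;> by_cases hac : a = c <;> simp [hab, hac] <;> omega

private lemma count_length2 (A : List (ℕ →₀ ℕ)) (b1 b2 : ℕ →₀ ℕ)
    (h : ∀ u ∈ A, u = b1 ∨ u = b2) (h12 : b1 ≠ b2) :
    A.count b1 + A.count b2 = A.length := by
  induction A with
  | nil => simp
  | cons a A ih =>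
    have hrec := ih (fun u hu => h u (List.mem_cons_of_mem _ hu))
    rcases h a (List.mem_cons_self) with rfl | rfl <;>
      simp [List.count_cons, h12, h12.symm] <;> omega

private lemma count_length3 (A : List (ℕ →₀ ℕ)) (b1 b2 b3 : ℕ →₀ ℕ)
    (h : ∀ u ∈ A, u = b1 ∨ u = b2 ∨ u = b3)
    (h12 : b1 ≠ b2) (h13 : b1 ≠ b3) (h23 : b2 ≠ b3) :
    A.count b1 + A.count b2 + A.count b3 = A.length := by
  induction A with
  | nil => simp
  | cons a A ih =>
    have hrec := ih (fun u hu => h u (List.mem_cons_of_mem _ hu))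
    rcases h a (List.mem_cons_self) with rfl | rfl | rfl <;>
      simp [List.count_cons, h12, h13, h23, h12.symm, h13.symm, h23.symm] <;> omega

private lemma ne_of_coord {a b : ℕ →₀ ℕ} (j : ℕ) (h : a j ≠ b j) : a ≠ b :=
  fun e => h (by rw [e])

private lemma two_le_iff {i j : ℕ} (hij : i ≠ j) (d : ℕ →₀ ℕ) :
    Finsupp.single i 1 + Finsupp.single j 1 ≤ d ↔ 1 ≤ d i ∧ 1 ≤ d j := by
  rw [Finsupp.le_def]
  constructor
  · intro h
    constructor
    · have := h i
      simpa [Finsupp.single_apply, Finsupp.add_apply, hij, Ne.symm hij] using this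
    · have := h j
      simpa [Finsupp.single_apply, Finsupp.add_apply, hij, Ne.symm hij] using this
  · rintro ⟨h1, h2⟩ t
    rcases eq_or_ne i t with rfl | hti
    · simpa [Finsupp.single_apply, Finsupp.add_apply, hij, Ne.symm hij] using h1
    · rcases eq_or_ne j t with rfl | htj
      · simpa [Finsupp.single_apply, Finsupp.add_apply, hij, Ne.symm hij] using h2
      · simp [Finsupp.single_apply, Finsupp.add_apply, hti, htj]

/-- The generic core result. -/
private lemma generic_main (B : List (ℕ →₀ ℕ)) (I : Ideal (MvPolynomial ℕ k)) (s : ℕ)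
    (hI : I = Ideal.span (Mo k '' {b | b ∈ B}))
    (hcount : ∀ A1 A2 : List (ℕ →₀ ℕ), (∀ b ∈ A1, b ∈ B) → (∀ b ∈ A2, b ∈ B) →
      A1.length = A2.length → A1.sum ≤ A2.sum → ∀ b, A1.count b = A2.count b) :
    minGens (I ^ s) = sFold I s ∧
    ∀ L1 L2 : List (MvPolynomial ℕ k),
      L1.length = s → L2.length = s →
      (∀ u ∈ L1, u ∈ minGens I) →
      (∀ u ∈ L2, u ∈ minGens I) →
      L1.prod = L2.prod → L1.Perm L2 := by
  have hT : ∀ b ∈ {b | b ∈ B}, ∀ b' ∈ {b | b ∈ B}, b ≤ b' → b = b' := by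
    intro b hb b' hb' hle
    have := hcount [b] [b'] (by simpa using hb) (by simpa using hb') rfl (by simpa using hle) b
    simp [List.count_cons] at this
    by_contra hne
    exact hne this.symm
  have hperm : ∀ A1 A2 : List (ℕ →₀ ℕ), (∀ b ∈ A1, b ∈ B) → (∀ b ∈ A2, b ∈ B) →
      A1.length = A2.length → A1.sum ≤ A2.sum → A1.Perm A2 := by
    intro A1 A2 h1 h2 hlen hle
    exact List.perm_iff_count.mpr (hcount A1 A2 h1 h2 hlen hle)
  have hTs : ∀ b ∈ sumsSet {b | b ∈ B} s, ∀ b' ∈ sumsSet {b | b ∈ B} s, b ≤ b' → b = b' := by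
    rintro d ⟨A1, hlen1, hA1, rfl⟩ d' ⟨A2, hlen2, hA2, rfl⟩ hle
    exact (hperm A1 A2 hA1 hA2 (by omega) hle).sum_eq
  constructor
  · rw [hI, span_Mo_pow, minGens_span_Mo hTs, sFold_span_Mo hT]
  · intro L1 L2 hl1 hl2 hm1 hm2 hprod
    rw [hI, minGens_span_Mo hT] at hm1 hm2
    obtain ⟨A1, hA1, rfl⟩ := list_lift L1 hm1
    obtain ⟨A2, hA2, rfl⟩ := list_lift L2 hm2
    rw [prod_map_Mo, prod_map_Mo] at hprod
    have hsum : A1.sum = A2.sum := Mo_inj hprod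
    have hlen : A1.length = A2.length := by
      simp only [List.length_map] at hl1 hl2; omega
    exact (hperm A1 A2 hA1 hA2 hlen hsum.le).map (Mo k)

private lemma mem_span_pair_iff (i j : ℕ) (p : MvPolynomial ℕ k) :
    p ∈ Ideal.span {(X i : MvPolynomial ℕ k), X j} ↔
      ∀ d ∈ p.support, 1 ≤ d i ∨ 1 ≤ d j := by
  have himg : ({(X i : MvPolynomial ℕ k), X j} : Set _) =
      Mo k '' {Finsupp.single i 1, Finsupp.single j 1} := by
    rw [Set.image_insert_eq, Set.image_singleton]
    rfl
  rw [himg, mem_span_Mo]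
  refine forall₂_congr fun d _ => ?_
  constructor
  · rintro ⟨b, hb, hbd⟩
    rcases hb with rfl | rfl
    · exact Or.inl (Finsupp.single_le_iff.mp hbd)
    · exact Or.inr (Finsupp.single_le_iff.mp hbd)
  · rintro (h | h)
    · exact ⟨Finsupp.single i 1, Or.inl rfl, Finsupp.single_le_iff.mpr h⟩
    · exact ⟨Finsupp.single j 1, Or.inr rfl, Finsupp.single_le_iff.mpr h⟩

end Aux
section Cases

variable {k : Type*} [Field k]

private noncomputable def e (i : ℕ) : ℕ →₀ ℕ := Finsupp.single i 1

private lemma e_apply (i j : ℕ) : e i j = if i = j then 1 else 0 := Finsupp.single_apply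

private lemma mem_pathCover_iff (n : ℕ) (p : MvPolynomial ℕ k) :
    p ∈ pathCoverIdeal k n ↔
      ∀ i ∈ Finset.Icc 1 (n - 1), ∀ d ∈ p.support, 1 ≤ d i ∨ 1 ≤ d (i + 1) := by
  unfold pathCoverIdeal
  simp only [Submodule.mem_iInf, mem_span_pair_iff]

private lemma pathCover_two :
    pathCoverIdeal k 2 = Ideal.span (Mo k '' {b | b ∈ [e 1, e 2]}) := by
  ext p
  rw [mem_pathCover_iff, mem_span_Mo]
  constructor
  · intro hp d hd
    rcases hp 1 (by decide) d hd with h | h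
    · exact ⟨e 1, by simp, Finsupp.single_le_iff.mpr h⟩
    · exact ⟨e 2, by simp, Finsupp.single_le_iff.mpr h⟩
  · intro hp i hi d hd
    have hi1 : i = 1 := by simp at hi; omega
    subst hi1
    obtain ⟨b, hb, hbd⟩ := hp d hd
    simp only [List.mem_cons, List.not_mem_nil, or_false, Set.mem_setOf_eq] at hb
    rcases hb with rfl | rfl
    · exact Or.inl (Finsupp.single_le_iff.mp hbd)
    · exact Or.inr (Finsupp.single_le_iff.mp hbd)

private lemma pathCover_three :
    pathCoverIdeal k 3 = Ideal.span (Mo k '' {b | b ∈ [e 2, e 1 + e 3]}) := by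
  ext p
  rw [mem_pathCover_iff, mem_span_Mo]
  constructor
  · intro hp d hd
    have h1 := hp 1 (by decide) d hd
    have h2 := hp 2 (by decide) d hd
    by_cases hd2 : 1 ≤ d 2
    · exact ⟨e 2, by simp, Finsupp.single_le_iff.mpr hd2⟩
    · refine ⟨e 1 + e 3, by simp, (two_le_iff (by norm_num) d).mpr ?_⟩
      constructor
      · rcases h1 with h | h
        · exact h
        · exact absurd h hd2
      · rcases h2 with h | h
        · exact absurd h hd2
        · exact h
  · intro hp i hi d hd
    obtain ⟨b, hb, hbd⟩ := hp d hd
    simp only [List.mem_cons, List.not_mem_nil, or_false, Set.mem_setOf_eq] at hb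
    have hii : i = 1 ∨ i = 2 := by simp at hi; omega
    rcases hb with rfl | rfl
    · have hd2 : 1 ≤ d 2 := Finsupp.single_le_iff.mp hbd
      rcases hii with rfl | rfl
      · exact Or.inr hd2
      · exact Or.inl hd2
    · obtain ⟨hd1, hd3⟩ := (two_le_iff (by norm_num) d).mp hbd
      rcases hii with rfl | rfl
      · exact Or.inl hd1
      · exact Or.inr hd3

private lemma pathCover_four :
    pathCoverIdeal k 4 = Ideal.span (Mo k '' {b | b ∈ [e 2 + e 3, e 1 + e 3, e 2 + e 4]}) := by
  ext p
  rw [mem_pathCover_iff, mem_span_Mo]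
  constructor
  · intro hp d hd
    have h1 := hp 1 (by decide) d hd
    have h2 := hp 2 (by decide) d hd
    have h3 := hp 3 (by decide) d hd
    have key : (1 ≤ d 2 ∧ 1 ≤ d 3) ∨ (1 ≤ d 1 ∧ 1 ≤ d 3) ∨ (1 ≤ d 2 ∧ 1 ≤ d 4) := by
      tauto
    rcases key with h | h | h
    · exact ⟨e 2 + e 3, by simp, (two_le_iff (by norm_num) d).mpr h⟩
    · exact ⟨e 1 + e 3, by simp, (two_le_iff (by norm_num) d).mpr h⟩
    · exact ⟨e 2 + e 4, by simp, (two_le_iff (by norm_num) d).mpr h⟩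
  · intro hp i hi d hd
    obtain ⟨b, hb, hbd⟩ := hp d hd
    simp only [List.mem_cons, List.not_mem_nil, or_false, Set.mem_setOf_eq] at hb
    have hii : i = 1 ∨ i = 2 ∨ i = 3 := by simp at hi; omega
    rcases hb with rfl | rfl | rfl
    · obtain ⟨ha, hb'⟩ := (two_le_iff (by norm_num) d).mp hbd
      rcases hii with rfl | rfl | rfl
      · exact Or.inr ha
      · exact Or.inl ha
      · exact Or.inl hb'
    · obtain ⟨ha, hb'⟩ := (two_le_iff (by norm_num) d).mp hbd
      rcases hii with rfl | rfl | rfl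
      · exact Or.inl ha
      · exact Or.inr hb'
      · exact Or.inl hb'
    · obtain ⟨ha, hb'⟩ := (two_le_iff (by norm_num) d).mp hbd
      rcases hii with rfl | rfl | rfl
      · exact Or.inr ha
      · exact Or.inl ha
      · exact Or.inr hb'

private lemma hcount_two :
    ∀ A1 A2 : List (ℕ →₀ ℕ), (∀ b ∈ A1, b ∈ [e 1, e 2]) → (∀ b ∈ A2, b ∈ [e 1, e 2]) →
      A1.length = A2.length → A1.sum ≤ A2.sum → ∀ b, A1.count b = A2.count b := by
  have h12 : e 1 ≠ e 2 := ne_of_coord 1 (by simp [e_apply])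
  intro A1 A2 hA1 hA2 hlen hle b
  simp only [List.mem_cons, List.not_mem_nil, or_false] at hA1 hA2
  have hcoord : ∀ A : List (ℕ →₀ ℕ), (∀ b ∈ A, b = e 1 ∨ b = e 2) →
      A.sum 1 = A.count (e 1) ∧ A.sum 2 = A.count (e 2) := by
    intro A hA
    constructor
    · refine count_coord1 A (e 1) 1 fun u hu => ?_
      rcases hA u hu with rfl | rfl <;> simp [e_apply, h12.symm]
    · refine count_coord1 A (e 2) 2 fun u hu => ?_
      rcases hA u hu with rfl | rfl <;> simp [e_apply, h12]
  obtain ⟨c11, c12⟩ := hcoord A1 hA1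
  obtain ⟨c21, c22⟩ := hcoord A2 hA2
  have hl1 := count_length2 A1 (e 1) (e 2) hA1 h12
  have hl2 := count_length2 A2 (e 1) (e 2) hA2 h12
  have g1 := Finsupp.le_def.mp hle 1
  have g2 := Finsupp.le_def.mp hle 2
  by_cases hb1 : b = e 1
  · subst hb1; omega
  by_cases hb2 : b = e 2
  · subst hb2; omega
  · rw [List.count_eq_zero.mpr, List.count_eq_zero.mpr]
    · intro hmem; rcases hA2 b hmem with rfl | rfl <;> simp_all
    · intro hmem; rcases hA1 b hmem with rfl | rfl <;> simp_all

private lemma hcount_three :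
    ∀ A1 A2 : List (ℕ →₀ ℕ), (∀ b ∈ A1, b ∈ [e 2, e 1 + e 3]) →
      (∀ b ∈ A2, b ∈ [e 2, e 1 + e 3]) →
      A1.length = A2.length → A1.sum ≤ A2.sum → ∀ b, A1.count b = A2.count b := by
  have h12 : e 2 ≠ e 1 + e 3 := ne_of_coord 2 (by simp [e_apply, Finsupp.add_apply])
  intro A1 A2 hA1 hA2 hlen hle b
  simp only [List.mem_cons, List.not_mem_nil, or_false] at hA1 hA2
  have hcoord : ∀ A : List (ℕ →₀ ℕ), (∀ b ∈ A, b = e 2 ∨ b = e 1 + e 3) →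
      A.sum 2 = A.count (e 2) ∧ A.sum 1 = A.count (e 1 + e 3) := by
    intro A hA
    constructor
    · refine count_coord1 A (e 2) 2 fun u hu => ?_
      rcases hA u hu with rfl | rfl <;> simp [e_apply, Finsupp.add_apply, h12.symm]
    · refine count_coord1 A (e 1 + e 3) 1 fun u hu => ?_
      rcases hA u hu with rfl | rfl <;> simp [e_apply, Finsupp.add_apply, h12]
  obtain ⟨c11, c12⟩ := hcoord A1 hA1
  obtain ⟨c21, c22⟩ := hcoord A2 hA2
  have hl1 := count_length2 A1 (e 2) (e 1 + e 3) hA1 h12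
  have hl2 := count_length2 A2 (e 2) (e 1 + e 3) hA2 h12
  have g1 := Finsupp.le_def.mp hle 1
  have g2 := Finsupp.le_def.mp hle 2
  by_cases hb1 : b = e 2
  · subst hb1; omega
  by_cases hb2 : b = e 1 + e 3
  · subst hb2; omega
  · rw [List.count_eq_zero.mpr, List.count_eq_zero.mpr]
    · intro hmem; rcases hA2 b hmem with rfl | rfl <;> simp_all
    · intro hmem; rcases hA1 b hmem with rfl | rfl <;> simp_all

private lemma hcount_four :
    ∀ A1 A2 : List (ℕ →₀ ℕ), (∀ b ∈ A1, b ∈ [e 2 + e 3, e 1 + e 3, e 2 + e 4]) →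
      (∀ b ∈ A2, b ∈ [e 2 + e 3, e 1 + e 3, e 2 + e 4]) →
      A1.length = A2.length → A1.sum ≤ A2.sum → ∀ b, A1.count b = A2.count b := by
  have h12 : e 2 + e 3 ≠ e 1 + e 3 := ne_of_coord 1 (by simp [e_apply, Finsupp.add_apply])
  have h13 : e 2 + e 3 ≠ e 2 + e 4 := ne_of_coord 3 (by simp [e_apply, Finsupp.add_apply])
  have h23 : e 1 + e 3 ≠ e 2 + e 4 := ne_of_coord 1 (by simp [e_apply, Finsupp.add_apply])
  intro A1 A2 hA1 hA2 hlen hle b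
  simp only [List.mem_cons, List.not_mem_nil, or_false] at hA1 hA2
  have hcoord : ∀ A : List (ℕ →₀ ℕ), (∀ b ∈ A, b = e 2 + e 3 ∨ b = e 1 + e 3 ∨ b = e 2 + e 4) →
      A.sum 1 = A.count (e 1 + e 3) ∧ A.sum 4 = A.count (e 2 + e 4) ∧
      A.sum 2 = A.count (e 2 + e 3) + A.count (e 2 + e 4) ∧
      A.sum 3 = A.count (e 2 + e 3) + A.count (e 1 + e 3) := by
    intro A hA
    refine ⟨?_, ?_, ?_, ?_⟩
    · refine count_coord1 A (e 1 + e 3) 1 fun u hu => ?_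
      rcases hA u hu with rfl | rfl | rfl <;>
        simp [e_apply, Finsupp.add_apply, h12, h12.symm, h13, h13.symm, h23, h23.symm]
    · refine count_coord1 A (e 2 + e 4) 4 fun u hu => ?_
      rcases hA u hu with rfl | rfl | rfl <;>
        simp [e_apply, Finsupp.add_apply, h12, h12.symm, h13, h13.symm, h23, h23.symm]
    · refine count_coord2 A (e 2 + e 3) (e 2 + e 4) 2 fun u hu => ?_
      rcases hA u hu with rfl | rfl | rfl <;>
        simp [e_apply, Finsupp.add_apply, h12, h12.symm, h13, h13.symm, h23, h23.symm]
    · refine count_coord2 A (e 2 + e 3) (e 1 + e 3) 3 fun u hu => ?_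
      rcases hA u hu with rfl | rfl | rfl <;>
        simp [e_apply, Finsupp.add_apply, h12, h12.symm, h13, h13.symm, h23, h23.symm]
  obtain ⟨c11, c12, c13, c14⟩ := hcoord A1 hA1
  obtain ⟨c21, c22, c23, c24⟩ := hcoord A2 hA2
  have hl1 := count_length3 A1 _ _ _ hA1 h12 h13 h23
  have hl2 := count_length3 A2 _ _ _ hA2 h12 h13 h23
  have g1 := Finsupp.le_def.mp hle 1
  have g2 := Finsupp.le_def.mp hle 2
  have g3 := Finsupp.le_def.mp hle 3
  have g4 := Finsupp.le_def.mp hle 4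
  by_cases hb1 : b = e 2 + e 3
  · subst hb1; omega
  by_cases hb2 : b = e 1 + e 3
  · subst hb2; omega
  by_cases hb3 : b = e 2 + e 4
  · subst hb3; omega
  · rw [List.count_eq_zero.mpr, List.count_eq_zero.mpr]
    · intro hmem; rcases hA2 b hmem with rfl | rfl | rfl <;> simp_all
    · intro hmem; rcases hA1 b hmem with rfl | rfl | rfl <;> simp_all

end Cases
/-- For `2 ≤ n ≤ 4` and `s ≥ 1`, `G(J(P_n)^s) = F(J(P_n)^s)`, and every
`s`-fold product of minimal generators of `J(P_n)` has a unique expression (two lists of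
minimal generators of length `s` with the same product are permutations of each other). -/
theorem small_paths_sFold_minimal_and_unique (k : Type*) [Field k]
    (n s : ℕ) (h2 : 2 ≤ n) (h4 : n ≤ 4) (hs : 1 ≤ s) :
    minGens ((pathCoverIdeal k n) ^ s) = sFold (pathCoverIdeal k n) s ∧
    ∀ L1 L2 : List (MvPolynomial ℕ k),
      L1.length = s → L2.length = s →
      (∀ u ∈ L1, u ∈ minGens (pathCoverIdeal k n)) →
      (∀ u ∈ L2, u ∈ minGens (pathCoverIdeal k n)) →
      L1.prod = L2.prod → L1.Perm L2 := by
  interval_cases n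
  · exact generic_main [e 1, e 2] _ s pathCover_two hcount_two
  · exact generic_main [e 2, e 1 + e 3] _ s pathCover_three hcount_three
  · exact generic_main [e 2 + e 3, e 1 + e 3, e 2 + e 4] _ s pathCover_four hcount_four
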